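/- Let D be a finite dihedral group of order 2n (n ≥ 1), generated by a rotation r of order n and a reflection s with s² = 1 and s·r·s = r⁻¹, and let ψ be a 2-cocycle on D with values in ℂˣ. If some reflection of D (i.e., an element of the form s·rᵏ) is ψ-regular, then ψ is a coboundary. -/

import Mathlib

/-- A 2-cocycle on `G` with values in `ℂˣ` (trivial action). -/
def IsTwoCocycle {G : Type*} [Group G] (ψ : G → G → ℂˣ) : Prop :=
  ∀ g h k : G, ψ g h * ψ (g * h) k = ψ h k * ψ g (h * k)

/-- An element `g` is `ψ`-regular if `ψ(g,h) = ψ(h,g)` for every `h` in the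
centralizer of `g`. -/
def IsPsiRegular {G : Type*} [Group G] (ψ : G → G → ℂˣ) (g : G) : Prop :=
  ∀ h ∈ Subgroup.centralizer {g}, ψ g h = ψ h g

/-- A 2-cocycle is a coboundary if it is cohomologous to the trivial cocycle. -/
def IsCoboundary {G : Type*} [Group G] (ψ : G → G → ℂˣ) : Prop :=
  ∃ μ : G → ℂˣ, ∀ g h : G, ψ g h = μ g * μ h * (μ (g * h))⁻¹


/-- A normalized 2-cocycle with values in `ℂˣ`. -/
structure NormCocycle (G : Type*) [Group G] where
  f : G → G → ℂˣ
  coc : ∀ g h k : G, f g h * f (g * h) k = f h k * f g (h * k)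
  one_left : ∀ g : G, f 1 g = 1
  one_right : ∀ g : G, f g 1 = 1

namespace NormCocycle

variable {G : Type*} [Group G] (c : NormCocycle G)

lemma inv_self (g : G) : c.f g⁻¹ g = c.f g g⁻¹ := by
  have h := c.coc g g⁻¹ g
  simpa [c.one_left, c.one_right] using h.symm

end NormCocycle

/-- The twisted product `ℂˣ ×_ψ G`. -/
@[ext]
structure Tw {G : Type*} [Group G] (c : NormCocycle G) where
  a : ℂˣ
  g : G

namespace Tw

variable {G : Type*} [Group G] {c : NormCocycle G}

instance : Mul (Tw c) := ⟨fun x y => ⟨x.a * y.a * c.f x.g y.g, x.g * y.g⟩⟩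
instance : One (Tw c) := ⟨⟨1, 1⟩⟩
instance : Inv (Tw c) := ⟨fun x => ⟨(x.a * c.f x.g x.g⁻¹)⁻¹, x.g⁻¹⟩⟩

@[simp] lemma mul_a (x y : Tw c) : (x * y).a = x.a * y.a * c.f x.g y.g := rfl
@[simp] lemma mul_g (x y : Tw c) : (x * y).g = x.g * y.g := rfl
@[simp] lemma one_a : (1 : Tw c).a = 1 := rfl
@[simp] lemma one_g : (1 : Tw c).g = 1 := rfl
@[simp] lemma inv_a (x : Tw c) : (x⁻¹).a = (x.a * c.f x.g x.g⁻¹)⁻¹ := rfl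
@[simp] lemma inv_g (x : Tw c) : (x⁻¹).g = x.g⁻¹ := rfl

instance : Group (Tw c) where
  mul_assoc x y z := by
    ext
    · have h := c.coc x.g y.g z.g
      simp only [mul_a, mul_g]
      have h' := congrArg (Units.val) h
      simp only [Units.val_mul] at h' ⊢
      linear_combination ((x.a : ℂ) * y.a * z.a) * h'
    · simp [mul_assoc]
  one_mul x := by ext <;> simp [c.one_left]
  mul_one x := by ext <;> simp [c.one_right]
  inv_mul_cancel x := by
    ext
    · simp only [mul_a, inv_a, inv_g, one_a]
      rw [c.inv_self]
      group
    · simp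

lemma mul_assoc' : True := trivial

/-- The projection onto `G`. -/
def proj : Tw c →* G where
  toFun := Tw.g
  map_one' := rfl
  map_mul' _ _ := rfl

@[simp] lemma proj_apply (x : Tw c) : (proj x : G) = x.g := rfl

/-- The central embedding of `ℂˣ`. -/
def iota : ℂˣ →* Tw c where
  toFun a := ⟨a, 1⟩
  map_one' := rfl
  map_mul' x y := by ext <;> simp [c.one_left]

@[simp] lemma iota_a (x : ℂˣ) : (iota x : Tw c).a = x := rfl
@[simp] lemma iota_g (x : ℂˣ) : (iota x : Tw c).g = 1 := rfl

lemma iota_comm (x : ℂˣ) (t : Tw c) : iota x * t = t * iota x := by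
  ext <;> simp [c.one_left, c.one_right, mul_comm]

lemma commute_iota (x : ℂˣ) (t : Tw c) : Commute (iota x) t := iota_comm x t

lemma iota_inj {x : ℂˣ} (h : (iota x : Tw c) = 1) : x = 1 := by
  have := congrArg Tw.a h
  simpa using this

lemma decomp (x : Tw c) : x = iota x.a * ⟨1, x.g⟩ := by
  ext <;> simp [iota, c.one_left]

/-- A multiplicative section gives a coboundary. -/
lemma coboundary_of_section (σ : G → Tw c) (hg : ∀ g, (σ g).g = g)
    (hm : ∀ g h, σ (g * h) = σ g * σ h) :
    ∃ μ : G → ℂˣ, ∀ g h : G, c.f g h = μ g * μ h * (μ (g * h))⁻¹ := by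
  refine ⟨fun g => ((σ g).a)⁻¹, fun g h => ?_⟩
  have h1 := congrArg Tw.a (hm g h)
  simp only [mul_a, hg] at h1
  simp only [h1]
  rw [mul_inv]
  apply Units.ext
  push_cast
  field_simp

end Tw

lemma exists_unit_pow_eq (m : ℕ) (hm : 0 < m) (u : ℂˣ) : ∃ v : ℂˣ, v ^ m = u := by
  obtain ⟨z, hz⟩ := IsAlgClosed.exists_pow_nat_eq (u : ℂ) hm
  have hz0 : z ≠ 0 := by
    intro h
    rw [h, zero_pow hm.ne'] at hz
    exact (Units.ne_zero u) hz.symm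
  exact ⟨Units.mk0 z hz0, Units.ext (by simp [hz])⟩

/-- If a reflection `s rᵏ` of the dihedral group of order `2n` is `ψ`-regular
for a 2-cocycle `ψ`, then `ψ` is a coboundary. -/
theorem dihedral_reflection_regular_implies_coboundary (n : ℕ) (hn : 1 ≤ n)
    (ψ : DihedralGroup n → DihedralGroup n → ℂˣ) (hψ : IsTwoCocycle ψ)
    (h : ∃ k : ZMod n, IsPsiRegular ψ (DihedralGroup.sr k)) :
    IsCoboundary ψ := by
  obtain ⟨k, hreg⟩ := h
  haveI : NeZero n := ⟨by omega⟩
  set u : ℂˣ := ψ 1 1 with hu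
  have hl : ∀ g, ψ 1 g = u := by
    intro g
    have h1 := hψ 1 1 g
    simp only [one_mul] at h1
    have h2 : ψ 1 g * ψ 1 1 = ψ 1 g * ψ 1 g := by rw [mul_comm (ψ 1 g) (ψ 1 1)]; exact h1
    exact (mul_left_cancel h2).symm
  have hr : ∀ g, ψ g 1 = u := by
    intro g
    have h1 := hψ g 1 1
    simp only [mul_one, one_mul] at h1
    exact mul_right_cancel h1
  let c : NormCocycle (DihedralGroup n) :=
    { f := fun g h => ψ g h * u⁻¹
      coc := by
        intro g h k
        show ψ g h * u⁻¹ * (ψ (g * h) k * u⁻¹) = ψ h k * u⁻¹ * (ψ g (h * k) * u⁻¹)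
        rw [mul_mul_mul_comm, mul_mul_mul_comm (ψ h k), hψ g h k]
      one_left := fun g => by show ψ 1 g * u⁻¹ = 1; rw [hl g]; simp
      one_right := fun g => by show ψ g 1 * u⁻¹ = 1; rw [hr g]; simp }
  have hcf : ∀ g h, c.f g h = ψ g h * u⁻¹ := fun _ _ => rfl
  have hregc : ∀ z : DihedralGroup n, DihedralGroup.sr k * z = z * DihedralGroup.sr k →
      c.f (DihedralGroup.sr k) z = c.f z (DihedralGroup.sr k) := by
    intro z hz
    have hzmem : z ∈ Subgroup.centralizer {DihedralGroup.sr k} := by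
      rw [Subgroup.mem_centralizer_iff]
      intro g hg
      rw [Set.mem_singleton_iff] at hg
      subst hg
      exact hz
    rw [hcf, hcf, hreg z hzmem]
  -- the elements R, A, T, S
  set R : Tw c := ⟨1, DihedralGroup.r 1⟩ with hRdef
  have hRng : (R ^ n).g = 1 := by
    rw [← Tw.proj_apply, map_pow, Tw.proj_apply]
    show (DihedralGroup.r 1 : DihedralGroup n) ^ n = 1
    rw [DihedralGroup.r_one_pow, ZMod.natCast_self, ← DihedralGroup.one_def]
  obtain ⟨d, hd⟩ := exists_unit_pow_eq n (by omega) ((R ^ n).a)⁻¹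
  set A : Tw c := Tw.iota d * R with hAdef
  have hAg : A.g = DihedralGroup.r 1 := by rw [hAdef]; simp [hRdef]
  have hRdec : R ^ n = Tw.iota ((R ^ n).a) := by
    conv_lhs => rw [Tw.decomp (R ^ n)]
    rw [hRng]
    have : (⟨1, 1⟩ : Tw c) = 1 := rfl
    rw [this, mul_one]
  have hAn : A ^ n = 1 := by
    rw [hAdef, (Tw.commute_iota d R).mul_pow, ← map_pow, hd, hRdec, ← map_mul]
    simp
  set T : Tw c := ⟨1, DihedralGroup.sr k⟩ with hTdef
  have hsrsr : DihedralGroup.sr k * DihedralGroup.sr k = (1 : DihedralGroup n) := by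
    rw [DihedralGroup.sr_mul_sr, sub_self, ← DihedralGroup.one_def]
  have hsrinv : (DihedralGroup.sr k)⁻¹ = DihedralGroup.sr k :=
    inv_eq_of_mul_eq_one_right hsrsr
  have hTng : (T ^ 2).g = 1 := by
    rw [← Tw.proj_apply, map_pow, Tw.proj_apply, hTdef]
    show (DihedralGroup.sr k : DihedralGroup n) ^ 2 = 1
    rw [pow_two, hsrsr]
  obtain ⟨f, hf⟩ := exists_unit_pow_eq 2 (by omega) ((T ^ 2).a)⁻¹
  set S : Tw c := Tw.iota f * T with hSdef
  have hSg : S.g = DihedralGroup.sr k := by rw [hSdef]; simp [hTdef]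
  have hTdec : T ^ 2 = Tw.iota ((T ^ 2).a) := by
    conv_lhs => rw [Tw.decomp (T ^ 2)]
    rw [hTng]
    have : (⟨1, 1⟩ : Tw c) = 1 := rfl
    rw [this, mul_one]
  have hS2 : S ^ 2 = 1 := by
    rw [hSdef, (Tw.commute_iota f T).mul_pow, ← map_pow, hf, hTdec, ← map_mul]
    simp
  have hSS : S * S = 1 := by rw [← pow_two]; exact hS2
  have hSinv : S⁻¹ = S := inv_eq_of_mul_eq_one_right hSS
  -- epsilon
  set X : Tw c := S * A * S⁻¹ * A with hXdef
  have hXg : X.g = 1 := by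
    rw [hXdef]
    simp only [Tw.mul_g, Tw.inv_g, hAg, hSg, hsrinv]
    rw [DihedralGroup.sr_mul_r, DihedralGroup.sr_mul_sr, DihedralGroup.r_mul_r,
      DihedralGroup.one_def]
    congr 1
    ring
  set ε : ℂˣ := X.a with hεdef
  have hX : X = Tw.iota ε := by
    conv_lhs => rw [Tw.decomp X]
    rw [hXg]
    have : (⟨1, 1⟩ : Tw c) = 1 := rfl
    rw [this, mul_one]
  have hSAS : S * A * S⁻¹ = Tw.iota ε * A⁻¹ := by
    have h1 : X * A⁻¹ = Tw.iota ε * A⁻¹ := by rw [hX]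
    rw [hXdef, mul_inv_cancel_right] at h1
    exact h1
  have hconj : ∀ m : ℕ, S * A ^ m * S⁻¹ = Tw.iota (ε ^ m) * (A ^ m)⁻¹ := by
    intro m
    calc S * A ^ m * S⁻¹ = (S * A * S⁻¹) ^ m := conj_pow.symm
      _ = (Tw.iota ε * A⁻¹) ^ m := by rw [hSAS]
      _ = Tw.iota ε ^ m * (A⁻¹) ^ m := (Tw.commute_iota ε A⁻¹).mul_pow m
      _ = Tw.iota (ε ^ m) * (A ^ m)⁻¹ := by rw [← map_pow, inv_pow]
  have hεn : ε ^ n = 1 := by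
    have h1 := hconj n
    rw [hAn, mul_one, mul_inv_cancel, inv_one, mul_one] at h1
    exact Tw.iota_inj h1.symm
  obtain ⟨γ, hγ2, hγn⟩ : ∃ γ : ℂˣ, γ ^ 2 = ε ∧ γ ^ n = 1 := by
    rcases Nat.even_or_odd n with he | ho
    · obtain ⟨m, hm⟩ := he
      have hm1 : 1 ≤ m := by omega
      have h2m : ((m : ZMod n)) + (m : ZMod n) = 0 := by
        have h0 : ((m + m : ℕ) : ZMod n) = 0 := by rw [← hm]; exact ZMod.natCast_self n
        push_cast at h0
        exact h0
      set z : DihedralGroup n := DihedralGroup.r ((m : ℕ) : ZMod n) with hzdef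
      have hcomm : DihedralGroup.sr k * z = z * DihedralGroup.sr k := by
        rw [hzdef, DihedralGroup.sr_mul_r, DihedralGroup.r_mul_sr]
        congr 1
        have : ((m : ZMod n)) = -((m : ZMod n)) := by
          rw [eq_neg_iff_add_eq_zero]; exact h2m
        rw [sub_eq_add_neg, ← this]
      have hfeq := hregc z hcomm
      set Z : Tw c := ⟨1, z⟩ with hZdef
      have hTZ : T * Z = Z * T := by
        apply Tw.ext
        · show (1 : ℂˣ) * 1 * c.f (DihedralGroup.sr k) z = 1 * 1 * c.f z (DihedralGroup.sr k)
          rw [hfeq]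
        · show DihedralGroup.sr k * z = z * DihedralGroup.sr k
          exact hcomm
      have hAmg : (A ^ m).g = z := by
        rw [← Tw.proj_apply, map_pow, Tw.proj_apply, hAg, hzdef]
        exact DihedralGroup.r_one_pow m
      have hAmdec : A ^ m = Tw.iota ((A ^ m).a) * Z := by
        conv_lhs => rw [Tw.decomp (A ^ m)]
        rw [hAmg, hZdef]
      have hcommS : S * A ^ m = A ^ m * S := by
        have hc : Commute S (A ^ m) := by
          rw [hSdef, hAmdec]
          exact Commute.mul_left
            (Tw.commute_iota f _)
            (((Tw.commute_iota ((A ^ m).a) T).symm).mul_right hTZ)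
        exact hc
      have hεm : ε ^ m = 1 := by
        have h1 := hconj m
        rw [hcommS, mul_inv_cancel_right] at h1
        have h2 : A ^ m * A ^ m = Tw.iota (ε ^ m) := eq_mul_inv_iff_mul_eq.mp h1
        rw [← pow_add, ← hm, hAn] at h2
        exact Tw.iota_inj h2.symm
      obtain ⟨γ, hγ⟩ := exists_unit_pow_eq 2 (by omega) ε
      refine ⟨γ, hγ, ?_⟩
      rw [show n = 2 * m by omega, pow_mul, hγ, hεm]
    · obtain ⟨m, hmo⟩ := ho
      refine ⟨ε ^ ((n + 1) / 2), ?_, ?_⟩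
      · rw [← pow_mul, show (n + 1) / 2 * 2 = n + 1 by omega, pow_succ, hεn, one_mul]
      · rw [← pow_mul, mul_comm, pow_mul, hεn, one_pow]
  -- the element B
  set B : Tw c := Tw.iota γ⁻¹ * A with hBdef
  have hBg : B.g = DihedralGroup.r 1 := by rw [hBdef]; simp [hAg]
  have hBn : B ^ n = 1 := by
    rw [hBdef, (Tw.commute_iota γ⁻¹ A).mul_pow, hAn, mul_one, ← map_pow, inv_pow, hγn,
      inv_one, map_one]
  have hSBS : S * B * S⁻¹ = B⁻¹ := by
    have h1 : S * B * S⁻¹ = Tw.iota γ⁻¹ * (S * A * S⁻¹) := by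
      rw [hBdef, ← mul_assoc, ← Tw.iota_comm γ⁻¹ S, mul_assoc (Tw.iota γ⁻¹) S A,
        mul_assoc (Tw.iota γ⁻¹) (S * A) S⁻¹]
    rw [h1, hSAS, ← mul_assoc, ← map_mul]
    have h2 : γ⁻¹ * ε = γ := by rw [← hγ2, pow_two, inv_mul_cancel_left]
    have h3 : (Tw.iota γ⁻¹ : Tw c)⁻¹ = Tw.iota γ := by
      rw [← map_inv, inv_inv]
    rw [h2, hBdef, mul_inv_rev (Tw.iota γ⁻¹) A, h3, ← Tw.iota_comm]
  -- zpow manipulation lemmas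
  have hKB : ∀ x y : ℤ, ((x : ZMod n) = (y : ZMod n)) → B ^ x = B ^ y := by
    intro x y hxy
    rw [ZMod.intCast_eq_intCast_iff] at hxy
    obtain ⟨t, ht⟩ := Int.ModEq.dvd hxy.symm
    have hx : x = y + n * t := by linarith
    rw [hx, zpow_add, zpow_mul, zpow_natCast, hBn, one_zpow, mul_one]
  have hLB : ∀ x : ℤ, B ^ x * S = S * B ^ (-x) := by
    intro x
    have h1 : S * B ^ (-x) * S⁻¹ = B ^ x := by
      rw [show S * B ^ (-x) * S⁻¹ = (S * B * S⁻¹) ^ (-x) from conj_zpow.symm, hSBS,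
        inv_zpow', neg_neg]
    calc B ^ x * S = (S * B ^ (-x) * S⁻¹) * S := by rw [h1]
      _ = S * B ^ (-x) := by rw [inv_mul_cancel_right]
  have hBB : ∀ x y : ℤ, B ^ x * B ^ y = B ^ (x + y) := fun x y => (zpow_add B x y).symm
  have hSB_B : ∀ x y : ℤ, (S * B ^ x) * B ^ y = S * B ^ (x + y) := by
    intro x y
    rw [mul_assoc, ← zpow_add]
  have hB_SB : ∀ x y : ℤ, B ^ x * (S * B ^ y) = S * B ^ (y - x) := by
    intro x y
    rw [← mul_assoc, hLB, mul_assoc, ← zpow_add]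
    congr 1
    ring
  have hSB_SB : ∀ x y : ℤ, (S * B ^ x) * (S * B ^ y) = B ^ (y - x) := by
    intro x y
    rw [mul_assoc, hB_SB, ← mul_assoc, hSS, one_mul]
  -- the splitting σ
  set σ : DihedralGroup n → Tw c := fun x =>
    match x with
    | .r i => B ^ ((i.val : ℤ))
    | .sr i => S * B ^ (((i - k).val : ℤ)) with hσdef
  have hσr : ∀ i : ZMod n, σ (DihedralGroup.r i) = B ^ ((i.val : ℤ)) := fun _ => rfl
  have hσsr : ∀ i : ZMod n, σ (DihedralGroup.sr i) = S * B ^ (((i - k).val : ℤ)) :=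
    fun _ => rfl
  have hcastN : ∀ i : ZMod n, ((i.val : ℕ) : ZMod n) = i := by
    intro i
    rw [ZMod.natCast_val, ZMod.cast_id]
  have hσg : ∀ x, (σ x).g = x := by
    rintro (i | i)
    · rw [hσr, ← Tw.proj_apply, map_zpow, Tw.proj_apply, hBg, zpow_natCast,
        DihedralGroup.r_one_pow]
      congr 1
      exact hcastN i
    · rw [hσsr]
      simp only [Tw.mul_g, hSg]
      rw [← Tw.proj_apply, map_zpow, Tw.proj_apply, hBg, zpow_natCast,
        DihedralGroup.r_one_pow, DihedralGroup.sr_mul_r]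
      congr 1
      rw [hcastN]
      ring
  have hσm : ∀ x y, σ (x * y) = σ x * σ y := by
    rintro (i | i) (j | j)
    · rw [DihedralGroup.r_mul_r, hσr, hσr, hσr, hBB]
      exact hKB _ _ (by push_cast [ZMod.natCast_val, ZMod.cast_id]; ring)
    · rw [DihedralGroup.r_mul_sr, hσsr, hσr, hσsr, hB_SB]
      congr 1
      exact hKB _ _ (by push_cast [ZMod.natCast_val, ZMod.cast_id]; ring)
    · rw [DihedralGroup.sr_mul_r, hσsr, hσsr, hσr, hSB_B]
      congr 1
      exact hKB _ _ (by push_cast [ZMod.natCast_val, ZMod.cast_id]; ring)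
    · rw [DihedralGroup.sr_mul_sr, hσr, hσsr, hσsr, hSB_SB]
      exact hKB _ _ (by push_cast [ZMod.natCast_val, ZMod.cast_id]; ring)
  obtain ⟨μ', hμ'⟩ := Tw.coboundary_of_section σ hσg hσm
  refine ⟨fun g => μ' g * u, fun g h => ?_⟩
  have h1 : ψ g h * u⁻¹ = μ' g * μ' h * (μ' (g * h))⁻¹ := hμ' g h
  calc ψ g h = (ψ g h * u⁻¹) * u := by rw [inv_mul_cancel_right]
    _ = μ' g * μ' h * (μ' (g * h))⁻¹ * u := by rw [h1]
    _ = (μ' g * u) * (μ' h * u) * ((μ' (g * h)) * u)⁻¹ := by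
        rw [mul_inv]
        apply Units.ext
        push_cast
        field_simp
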